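/- Let T be an analytic norm-increasing operator on a Hilbert space H whose spectrum is contained in the closed unit disc, and let M be a nonzero closed invariant subspace of the Cauchy dual T'. Then for any λ in the approximate point spectrum of T' restricted to M, there exists a weakly null sequence of unit vectors (u_n) in M such that both (T − λ)u_n → 0 and (T' − λ)u_n → 0 in norm. -/

import Mathlib

open ContinuousLinearMap

section Stmt4Aux

variable {H : Type*} [NormedAddCommGroup H] [InnerProductSpace ℂ H] [CompleteSpace H]

lemma stmt4_aux_closed_range (S : H →L[ℂ] H) (hS : ∀ x, ‖x‖ ≤ ‖S x‖) :
    IsClosed ((LinearMap.range (S : H →ₗ[ℂ] H) : Submodule ℂ H) : Set H) := by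
  have h : AntilipschitzWith 1 S := by
    refine AntilipschitzWith.of_le_mul_dist fun x y => ?_
    simp only [dist_eq_norm, NNReal.coe_one, one_mul, ← map_sub]
    exact hS _
  have h2 := h.isClosed_range S.uniformContinuous
  convert h2 using 1
  exact LinearMap.coe_range _

lemma stmt4_aux_ker_orth (S : H →L[ℂ] H) (hS : ∀ x, ‖x‖ ≤ ‖S x‖) :
    (LinearMap.ker ((adjoint S : H →L[ℂ] H) : H →ₗ[ℂ] H))ᗮ = LinearMap.range (S : H →ₗ[ℂ] H) := by
  have h1 : LinearMap.ker ((adjoint S : H →L[ℂ] H) : H →ₗ[ℂ] H) = (LinearMap.range (S : H →ₗ[ℂ] H))ᗮ := by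
    ext q
    simp only [LinearMap.mem_ker, Submodule.mem_orthogonal, ContinuousLinearMap.coe_coe]
    constructor
    · rintro h u ⟨z, rfl⟩
      show (inner ℂ (S z) q : ℂ) = 0
      rw [← adjoint_inner_right, h, inner_zero_right]
    · intro h
      have h2 : (inner ℂ (adjoint S q) (adjoint S q) : ℂ) = 0 := by
        rw [adjoint_inner_left]
        exact inner_eq_zero_symm.mp (h _ ⟨adjoint S q, rfl⟩)
      exact inner_self_eq_zero.mp h2
  rw [h1, (LinearMap.range (S : H →ₗ[ℂ] H)).orthogonal_orthogonal_eq_closure,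
    (stmt4_aux_closed_range S hS).submodule_topologicalClosure_eq]

lemma stmt4_aux_inv (A : H →L[ℂ] H) (hA : IsUnit A) (u : ℕ → H)
    (hu : Filter.Tendsto (fun n => A (u n)) Filter.atTop (nhds 0)) :
    Filter.Tendsto u Filter.atTop (nhds 0) := by
  obtain ⟨w, rfl⟩ := hA
  have h2 := (((w⁻¹ : (H →L[ℂ] H)ˣ) : H →L[ℂ] H).continuous.tendsto 0).comp hu
  simp only [Function.comp_def, map_zero] at h2
  refine h2.congr fun n => ?_
  show ((w⁻¹ : (H →L[ℂ] H)ˣ) : H →L[ℂ] H) ((w : H →L[ℂ] H) (u n)) = u n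
  rw [← ContinuousLinearMap.comp_apply, ← ContinuousLinearMap.mul_def]
  have h3 : ((w⁻¹ : (H →L[ℂ] H)ˣ) : H →L[ℂ] H) * (w : H →L[ℂ] H) = 1 := by
    exact_mod_cast w.inv_mul
  rw [h3]; rfl

end Stmt4Aux

/-- If `T` is an analytic norm-increasing operator with spectrum in the closed unit
disc and `M` is a nonzero closed invariant subspace of the Cauchy dual `T'`, then for
every `λ` in the approximate point spectrum of `T'|_M` there is a weakly null sequence
of unit vectors `(u n)` in `M` which is a Weyl sequence for both `(λ, T)` and `(λ, T')`. -/
theorem stmt4 {H : Type*} [NormedAddCommGroup H] [InnerProductSpace ℂ H] [CompleteSpace H]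
    (T : H →L[ℂ] H)
    (hexp : ∀ x : H, ‖x‖ ≤ ‖T x‖)
    (hanalytic : ∀ x : H, (∀ n : ℕ, x ∈ LinearMap.range ((T ^ n : H →L[ℂ] H) : H →ₗ[ℂ] H)) → x = 0)
    (hspec : ∀ z ∈ spectrum ℂ T, ‖z‖ ≤ 1)
    (hunit : IsUnit ((adjoint T) ∘L T))
    (T' : H →L[ℂ] H) (hT' : T' = T ∘L Ring.inverse ((adjoint T) ∘L T))
    (M : Submodule ℂ H) (hMclosed : IsClosed (M : Set H)) (hM0 : M ≠ ⊥)
    (hMinv : ∀ x ∈ M, T' x ∈ M)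
    (lam : ℂ) (v : ℕ → H) (hvM : ∀ n, v n ∈ M) (hvnorm : ∀ n, ‖v n‖ = 1)
    (hvconv : Filter.Tendsto (fun n => T' (v n) - lam • v n) Filter.atTop (nhds 0)) :
    ∃ u : ℕ → H, (∀ n, u n ∈ M) ∧ (∀ n, ‖u n‖ = 1) ∧
      (∀ y : H, Filter.Tendsto (fun n => (inner ℂ y (u n) : ℂ)) Filter.atTop (nhds 0)) ∧
      Filter.Tendsto (fun n => T (u n) - lam • u n) Filter.atTop (nhds 0) ∧
      Filter.Tendsto (fun n => T' (u n) - lam • u n) Filter.atTop (nhds 0) := by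
  classical
  set A : H →L[ℂ] H := adjoint T ∘L T with hAdef
  set B : H →L[ℂ] H := Ring.inverse A with hBdef
  have hABmul : A * B = 1 := Ring.mul_inverse_cancel A hunit
  have hAB : ∀ x : H, A (B x) = x := fun x => by
    have h := congrArg (fun (f : H →L[ℂ] H) => f x) hABmul
    simpa using h
  have hT'x : ∀ x : H, T' x = T (B x) := fun x => by rw [hT']; rfl
  have hTstarT' : ∀ x : H, adjoint T (T' x) = x := fun x => by
    rw [hT'x]
    have h : adjoint T (T (B x)) = A (B x) := rfl
    rw [h, hAB]
  -- inner ℂ product identities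
  have hinner : ∀ x : H, (inner ℂ (T' x) (T' x) : ℂ) = inner ℂ x (B x) := fun x => by
    rw [hT'x]
    calc (inner ℂ (T (B x)) (T (B x)) : ℂ)
        = inner ℂ (adjoint T (T (B x))) (B x) := (adjoint_inner_left T (B x) (T (B x))).symm
      _ = inner ℂ x (B x) := by
          rw [show adjoint T (T (B x)) = A (B x) from rfl, hAB]
  have hnormsqT' : ∀ x : H, ‖T' x‖ ^ 2 = RCLike.re ((inner ℂ x (B x)) : ℂ) := fun x => by
    rw [← inner_self_eq_norm_sq (𝕜 := ℂ) (T' x), hinner x]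
  have hBsq : ∀ x : H, ‖B x‖ ^ 2 ≤ RCLike.re ((inner ℂ x (B x)) : ℂ) := fun x => by
    have h1 : ‖B x‖ ≤ ‖T (B x)‖ := hexp _
    have h2 : ‖T (B x)‖ = ‖T' x‖ := by rw [hT'x]
    have h3 := hnormsqT' x
    nlinarith [norm_nonneg (B x), norm_nonneg (T' x)]
  have hre_le : ∀ x : H, RCLike.re ((inner ℂ x (B x)) : ℂ) ≤ ‖x‖ * ‖B x‖ := fun x => by
    calc RCLike.re ((inner ℂ x (B x)) : ℂ) ≤ ‖(inner ℂ x (B x) : ℂ)‖ := RCLike.re_le_norm _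
      _ ≤ ‖x‖ * ‖B x‖ := norm_inner_le_norm x (B x)
  have hBle : ∀ x : H, ‖B x‖ ≤ ‖x‖ := fun x => by
    have h1 := hBsq x
    have h2 := hre_le x
    nlinarith [norm_nonneg (B x), norm_nonneg x]
  have hT'le : ∀ x : H, ‖T' x‖ ≤ ‖x‖ := fun x => by
    have h1 := hnormsqT' x
    have h2 := hre_le x
    have h3 := hBle x
    nlinarith [norm_nonneg (T' x), norm_nonneg x, norm_nonneg (B x)]
  -- apply adjoint T to the convergence
  have hTv : Filter.Tendsto (fun n => v n - lam • adjoint T (v n)) Filter.atTop (nhds 0) := by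
    have h1 := ((adjoint T).continuous.tendsto 0).comp hvconv
    simp only [Function.comp_def, map_zero] at h1
    refine h1.congr fun n => ?_
    rw [map_sub, map_smul, hTstarT']
  have hvnot : ¬ Filter.Tendsto v Filter.atTop (nhds 0) := by
    intro h
    have h2 := h.norm
    simp only [norm_zero] at h2
    have h3 : Filter.Tendsto (fun _ : ℕ => (1 : ℝ)) Filter.atTop (nhds 0) :=
      h2.congr fun n => hvnorm n
    have h4 := tendsto_nhds_unique h3 tendsto_const_nhds
    norm_num at h4
  have hlam0 : lam ≠ 0 := by
    rintro rfl
    apply hvnot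
    simpa using hTv
  have hTsv : Filter.Tendsto (fun n => adjoint T (v n) - lam⁻¹ • v n) Filter.atTop (nhds 0) := by
    have h1 := hTv.const_smul (-(lam⁻¹))
    simp only [smul_zero] at h1
    refine h1.congr fun n => ?_
    rw [neg_smul, smul_sub, smul_smul, inv_mul_cancel₀ hlam0, one_smul, neg_sub]
  -- 1 ≤ ‖lam‖ via the spectrum hypothesis
  have hlamge : (1 : ℝ) ≤ ‖lam‖ := by
    have hmem : (starRingEnd ℂ) lam⁻¹ ∈ spectrum ℂ T := by
      rw [spectrum.mem_iff]
      intro hu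
      have hstar := hu.star
      have heq : star (algebraMap ℂ (H →L[ℂ] H) ((starRingEnd ℂ) lam⁻¹) - T)
          = algebraMap ℂ (H →L[ℂ] H) lam⁻¹ - adjoint T := by
        rw [Algebra.algebraMap_eq_smul_one, Algebra.algebraMap_eq_smul_one,
          star_sub, star_smul, star_one, star_eq_adjoint]
        congr 1
        simp
      rw [heq] at hstar
      have happ : Filter.Tendsto
          (fun n => (algebraMap ℂ (H →L[ℂ] H) lam⁻¹ - adjoint T) (v n)) Filter.atTop (nhds 0) := by
        have h1 := hTsv.neg
        simp only [neg_zero] at h1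
        refine h1.congr fun n => ?_
        simp only [Algebra.algebraMap_eq_smul_one, ContinuousLinearMap.sub_apply,
          ContinuousLinearMap.smul_apply, ContinuousLinearMap.one_apply, neg_sub]
      exact hvnot (stmt4_aux_inv _ hstar _ happ)
    have h1 := hspec _ hmem
    have h2 : ‖lam‖⁻¹ ≤ 1 := by
      rw [show ‖(starRingEnd ℂ) lam⁻¹‖ = ‖lam‖⁻¹ by rw [RCLike.norm_conj, norm_inv]] at h1
      exact h1
    have hpos : (0 : ℝ) < ‖lam‖ := norm_pos_iff.mpr hlam0
    calc (1 : ℝ) = ‖lam‖ * ‖lam‖⁻¹ := (mul_inv_cancel₀ hpos.ne').symm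
      _ ≤ ‖lam‖ * 1 := by gcongr
      _ = ‖lam‖ := mul_one _
  -- ‖T' v n‖ → ‖lam‖ and ‖lam‖ = 1
  have hnormT'v : Filter.Tendsto (fun n => ‖T' (v n)‖) Filter.atTop (nhds ‖lam‖) := by
    have h0 : Filter.Tendsto (fun n => ‖T' (v n) - lam • v n‖) Filter.atTop (nhds 0) := by
      simpa using hvconv.norm
    have h1 : Filter.Tendsto (fun n => ‖T' (v n)‖ - ‖lam‖) Filter.atTop (nhds 0) :=
      squeeze_zero_norm (fun n => by
        have h := abs_norm_sub_norm_le (T' (v n)) (lam • v n)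
        rw [norm_smul, hvnorm n, mul_one] at h
        simpa using h) h0
    have h2 := h1.add_const ‖lam‖
    simpa using h2
  have hlamle : ‖lam‖ ≤ 1 :=
    le_of_tendsto' hnormT'v fun n => (hT'le _).trans_eq (hvnorm n)
  have hlam1 : ‖lam‖ = 1 := le_antisymm hlamle hlamge
  -- v n - B (v n) → 0
  have hsub0 : Filter.Tendsto (fun n => v n - B (v n)) Filter.atTop (nhds 0) := by
    have hsq : ∀ n, ‖v n - B (v n)‖ ^ 2 ≤ 1 - ‖T' (v n)‖ ^ 2 := fun n => by
      have hns := @norm_sub_sq ℂ _ _ _ _ (v n) (B (v n))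
      have h1 := hBsq (v n)
      have h2 := hnormsqT' (v n)
      rw [hvnorm n] at hns
      nlinarith
    have hsqt : Filter.Tendsto (fun n => ‖v n - B (v n)‖ ^ 2) Filter.atTop (nhds 0) := by
      have hup : Filter.Tendsto (fun n => 1 - ‖T' (v n)‖ ^ 2) Filter.atTop (nhds 0) := by
        have h1 := hnormT'v.pow 2
        rw [hlam1] at h1
        have h2 := (tendsto_const_nhds (α := ℕ) (x := (1 : ℝ))).sub h1
        simpa using h2
      exact squeeze_zero (fun n => sq_nonneg _) hsq hup
    have hnt : Filter.Tendsto (fun n => ‖v n - B (v n)‖) Filter.atTop (nhds 0) := by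
      have h1 := (Real.continuous_sqrt.tendsto 0).comp hsqt
      simp only [Function.comp_def, Real.sqrt_zero] at h1
      refine h1.congr fun n => ?_
      rw [Real.sqrt_sq (norm_nonneg _)]
    exact tendsto_zero_iff_norm_tendsto_zero.mpr hnt
  -- T v n - lam • v n → 0
  have hTvconv : Filter.Tendsto (fun n => T (v n) - lam • v n) Filter.atTop (nhds 0) := by
    have h1 := (T.continuous.tendsto 0).comp hsub0
    simp only [Function.comp_def, map_zero] at h1
    have h2 := h1.add hvconv
    simp only [add_zero] at h2
    refine h2.congr fun n => ?_
    rw [map_sub, hT'x]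
    abel
  -- powers
  have hpow : ∀ k : ℕ, Filter.Tendsto (fun n => (T ^ k) (v n) - lam ^ k • v n)
      Filter.atTop (nhds 0) := by
    intro k
    induction k with
    | zero =>
      simp only [pow_zero, ContinuousLinearMap.one_apply, one_smul, sub_self]
      exact tendsto_const_nhds
    | succ k ih =>
      have h1 := (T.continuous.tendsto 0).comp ih
      simp only [Function.comp_def, map_zero] at h1
      have h2 := hTvconv.const_smul (lam ^ k)
      simp only [smul_zero] at h2
      have h3 := h1.add h2
      simp only [add_zero] at h3
      refine h3.congr fun n => ?_
      have hps : (T ^ (k + 1)) (v n) = T ((T ^ k) (v n)) := by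
        rw [pow_succ']; rfl
      simp only [map_sub, map_smul, smul_sub, smul_smul, ← pow_succ, hps]
      abel
  -- norm-increasing powers
  have hrange : ∀ (k : ℕ) (x : H), ‖x‖ ≤ ‖(T ^ k) x‖ := by
    intro k
    induction k with
    | zero => intro x; simp
    | succ k ih =>
      intro x
      have hps : (T ^ (k + 1)) x = (T ^ k) (T x) := by
        rw [pow_succ]; rfl
      rw [hps]
      exact (hexp x).trans (ih (T x))
  set Kf : ℕ → Submodule ℂ H := fun k => LinearMap.ker ((adjoint (T ^ k) : H →L[ℂ] H) : H →ₗ[ℂ] H) with hKfdef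
  have horth : ∀ k : ℕ, (Kf k)ᗮ = LinearMap.range ((T ^ k : H →L[ℂ] H) : H →ₗ[ℂ] H) := fun k =>
    stmt4_aux_ker_orth _ (hrange k)
  have hmono : Monotone Kf := by
    apply monotone_nat_of_le_succ
    intro k b hb
    simp only [hKfdef, LinearMap.mem_ker, ContinuousLinearMap.coe_coe] at hb ⊢
    have hadj : adjoint (T ^ (k + 1)) = adjoint T ∘L adjoint (T ^ k) := by
      rw [pow_succ, ContinuousLinearMap.mul_def, adjoint_comp]
    rw [hadj, ContinuousLinearMap.comp_apply, hb, map_zero]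
  have hKtop : (⨆ k, Kf k).topologicalClosure = ⊤ := by
    rw [Submodule.topologicalClosure_eq_top_iff, eq_bot_iff]
    intro x hx
    have hxr : ∀ k : ℕ, x ∈ LinearMap.range ((T ^ k : H →L[ℂ] H) : H →ₗ[ℂ] H) := fun k => by
      rw [← horth k]
      exact Submodule.orthogonal_le (le_iSup Kf k) hx
    have h0 := hanalytic x hxr
    simp [h0]
  have hbconv : ∀ b ∈ ⨆ k, Kf k,
      Filter.Tendsto (fun n => (inner ℂ b (v n) : ℂ)) Filter.atTop (nhds 0) := by
    intro b hb
    obtain ⟨k, hk⟩ := (Submodule.mem_iSup_of_directed Kf hmono.directed_le).mp hb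
    have hkb : adjoint (T ^ k) b = 0 := by
      simpa only [hKfdef, LinearMap.mem_ker, ContinuousLinearMap.coe_coe] using hk
    have hw2 : Filter.Tendsto (fun n => v n - (lam ^ k)⁻¹ • ((T ^ k) (v n)))
        Filter.atTop (nhds 0) := by
      have h1 := (hpow k).const_smul (-(lam ^ k)⁻¹)
      simp only [smul_zero] at h1
      refine h1.congr fun n => ?_
      rw [neg_smul, smul_sub, smul_smul, inv_mul_cancel₀ (pow_ne_zero k hlam0),
        one_smul, neg_sub]
    have heq : ∀ n, (inner ℂ b (v n) : ℂ) = inner ℂ b (v n - (lam ^ k)⁻¹ • ((T ^ k) (v n))) := by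
      intro n
      rw [inner_sub_right, inner_smul_right]
      have h0 : (inner ℂ b ((T ^ k) (v n)) : ℂ) = 0 := by
        rw [← adjoint_inner_left (T ^ k) (v n) b, hkb, inner_zero_left]
      rw [h0, mul_zero, sub_zero]
    have h1 := Filter.Tendsto.inner (𝕜 := ℂ) (tendsto_const_nhds (α := ℕ) (x := b)) hw2
    simp only [inner_zero_right] at h1
    exact h1.congr fun n => (heq n).symm
  have hweak : ∀ y : H, Filter.Tendsto (fun n => (inner ℂ y (v n) : ℂ)) Filter.atTop (nhds 0) := by
    intro y
    rw [Metric.tendsto_atTop]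
    intro ε hε
    have hy : y ∈ closure ((⨆ k, Kf k : Submodule ℂ H) : Set H) := by
      have h1 : y ∈ (⨆ k, Kf k).topologicalClosure := by rw [hKtop]; trivial
      rwa [← Submodule.topologicalClosure_coe]
    obtain ⟨b, hbK, hby⟩ := Metric.mem_closure_iff.mp hy (ε / 2) (by positivity)
    have hb0 := hbconv b hbK
    rw [Metric.tendsto_atTop] at hb0
    obtain ⟨N, hN⟩ := hb0 (ε / 2) (by positivity)
    refine ⟨N, fun n hn => ?_⟩
    have h1 := hN n hn
    rw [dist_zero_right] at h1 ⊢
    have hsplit : (inner ℂ y (v n) : ℂ) = inner ℂ (y - b) (v n) + inner ℂ b (v n) := by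
      rw [inner_sub_left]; ring
    rw [hsplit]
    calc ‖(inner ℂ (y - b) (v n) : ℂ) + inner ℂ b (v n)‖
        ≤ ‖(inner ℂ (y - b) (v n) : ℂ)‖ + ‖(inner ℂ b (v n) : ℂ)‖ := norm_add_le _ _
      _ ≤ ‖y - b‖ * ‖v n‖ + ‖(inner ℂ b (v n) : ℂ)‖ := by
          gcongr
          exact norm_inner_le_norm _ _
      _ < ε / 2 + ε / 2 := by
          rw [hvnorm n, mul_one]
          have hyb : ‖y - b‖ < ε / 2 := by rwa [dist_eq_norm] at hby
          exact add_lt_add hyb h1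
      _ = ε := by ring
  exact ⟨v, hvM, hvnorm, hweak, hTvconv, hvconv⟩
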